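/- Fix n ≥ 1 and nonnegative real weights W(e) for each unordered pair e = {i,j} of distinct elements of {1,…,n} (the edges of the complete graph K_n). For 0 ≤ j ≤ ⌊n/2⌋ let a_j := Σ_M Π_{e ∈ M} W(e), where the sum is over all matchings M of size j, i.e., sets of j pairwise disjoint edges (so a_0 = 1). Then every complex root of the polynomial Σ_{j=0}^{⌊n/2⌋} a_j z^j is real (and nonpositive). -/

import Mathlib

open Finset Complex

open scoped Classical in
noncomputable def hlMatchings (n : ℕ) (S : Finset (Fin n)) : Finset (Finset (Finset (Fin n))) :=
  Finset.univ.filter (fun M : Finset (Finset (Fin n)) =>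
    (∀ e ∈ M, e.card = 2 ∧ e ⊆ S) ∧ ∀ e ∈ M, ∀ e' ∈ M, e ≠ e' → Disjoint e e')

lemma mem_hlMatchings {n : ℕ} {S : Finset (Fin n)} {M : Finset (Finset (Fin n))} :
    M ∈ hlMatchings n S ↔
      (∀ e ∈ M, e.card = 2 ∧ e ⊆ S) ∧ ∀ e ∈ M, ∀ e' ∈ M, e ≠ e' → Disjoint e e' := by
  classical
  simp [hlMatchings]

noncomputable def hlP {n : ℕ} (W : Finset (Fin n) → ℝ) (S : Finset (Fin n)) (z : ℂ) : ℂ :=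
  ∑ M ∈ hlMatchings n S, (∏ e ∈ M, (W e : ℂ)) * z ^ M.card

lemma edge_repr {n : ℕ} {e : Finset (Fin n)} {v : Fin n} (h2 : e.card = 2) (hv : v ∈ e) :
    ∃ u, u ≠ v ∧ e = {v, u} := by
  obtain ⟨a, b, hab, rfl⟩ := Finset.card_eq_two.mp h2
  rcases Finset.mem_insert.mp hv with rfl | hb
  · exact ⟨b, fun h => hab h.symm, rfl⟩
  · rcases Finset.mem_singleton.mp hb with rfl
    exact ⟨a, fun h => hab h, by ext x; simp [or_comm]⟩

lemma hlP_rec {n : ℕ} (W : Finset (Fin n) → ℝ) {S : Finset (Fin n)} {v : Fin n} (hv : v ∈ S)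
    (z : ℂ) :
    hlP W S z = hlP W (S.erase v) z
      + z * ∑ u ∈ S.erase v, (W {v, u} : ℂ) * hlP W ((S.erase v).erase u) z := by
  classical
  have hA : (hlMatchings n S).filter (fun M => ∀ e ∈ M, v ∉ e) = hlMatchings n (S.erase v) := by
    ext M
    simp only [Finset.mem_filter, mem_hlMatchings]
    constructor
    · rintro ⟨⟨h1, h2⟩, h3⟩
      exact ⟨fun e he => ⟨(h1 e he).1, Finset.subset_erase.mpr ⟨(h1 e he).2, h3 e he⟩⟩, h2⟩
    · rintro ⟨h1, h2⟩
      exact ⟨⟨fun e he => ⟨(h1 e he).1, (Finset.subset_erase.mp (h1 e he).2).1⟩, h2⟩,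
        fun e he => (Finset.subset_erase.mp (h1 e he).2).2⟩
  have hvnotin : ∀ u : Fin n, ∀ M ∈ hlMatchings n ((S.erase v).erase u),
      ({v, u} : Finset (Fin n)) ∉ M := by
    intro u M hM hmem
    have := ((mem_hlMatchings.mp hM).1 _ hmem).2
    have : v ∈ (S.erase v).erase u := this (by simp)
    simp at this
  have hB : (hlMatchings n S).filter (fun M => ¬ ∀ e ∈ M, v ∉ e) =
      (S.erase v).biUnion
        (fun u => (hlMatchings n ((S.erase v).erase u)).image (insert {v, u})) := by
    ext M
    rw [Finset.mem_filter, Finset.mem_biUnion]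
    constructor
    · rintro ⟨hM, hnp⟩
      push_neg at hnp
      obtain ⟨e, he, hve⟩ := hnp
      obtain ⟨h1, h2⟩ := mem_hlMatchings.mp hM
      obtain ⟨u, huv, rfl⟩ := edge_repr (h1 e he).1 hve
      have huS : u ∈ S.erase v := Finset.mem_erase.mpr ⟨huv, (h1 _ he).2 (by simp)⟩
      refine ⟨u, huS, Finset.mem_image.mpr ⟨M.erase {v, u}, ?_, ?_⟩⟩
      · rw [mem_hlMatchings]
        constructor
        · intro e' he'
          obtain ⟨hne, he'M⟩ := Finset.mem_erase.mp he'
          have hdisj := h2 _ he _ he'M (Ne.symm hne)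
          refine ⟨(h1 e' he'M).1, Finset.subset_erase.mpr ⟨Finset.subset_erase.mpr
            ⟨(h1 e' he'M).2, ?_⟩, ?_⟩⟩
          · exact Finset.disjoint_left.mp hdisj (by simp)
          · exact Finset.disjoint_left.mp hdisj (by simp)
        · intro e1 h1' e2 h2' hne
          exact h2 _ (Finset.mem_erase.mp h1').2 _ (Finset.mem_erase.mp h2').2 hne
      · exact Finset.insert_erase he
    · rintro ⟨u, huS, hMim⟩
      obtain ⟨M', hM', rfl⟩ := Finset.mem_image.mp hMim
      obtain ⟨huv, huS'⟩ := Finset.mem_erase.mp huS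
      have hvS' : v ∈ S := hv
      have hvu2 : ({v, u} : Finset (Fin n)).card = 2 := by
        rw [Finset.card_insert_of_notMem (by simp [Ne.symm huv]), Finset.card_singleton]
      obtain ⟨h1, h2⟩ := mem_hlMatchings.mp hM'
      have hnotv : ∀ e ∈ M', v ∉ e ∧ u ∉ e := by
        intro e he
        have hsub := (h1 e he).2
        constructor
        · intro hc
          have := hsub hc; simp at this
        · intro hc
          have := hsub hc; simp at this
      refine ⟨mem_hlMatchings.mpr ⟨?_, ?_⟩, ?_⟩
      · intro e he
        rcases Finset.mem_insert.mp he with he' | heM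
        · rw [he']
          refine ⟨hvu2, ?_⟩
          intro x hx
          rcases Finset.mem_insert.mp hx with rfl | hx
          · exact hvS'
          · rcases Finset.mem_singleton.mp hx with rfl
            exact huS'
        · exact ⟨(h1 e heM).1, (h1 e heM).2.trans
            ((Finset.erase_subset _ _).trans (Finset.erase_subset _ _))⟩
      · intro e1 he1 e2 he2 hne
        rcases Finset.mem_insert.mp he1 with h1e | he1' <;>
          rcases Finset.mem_insert.mp he2 with h2e | he2'
        · exact absurd (h1e.trans h2e.symm) hne
        · rw [h1e]
          refine Finset.disjoint_left.mpr ?_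
          intro x hx
          rcases Finset.mem_insert.mp hx with hxv | hx
          · rw [hxv]; exact (hnotv _ he2').1
          · rw [Finset.mem_singleton.mp hx]
            exact (hnotv _ he2').2
        · rw [h2e]
          refine Finset.disjoint_right.mpr ?_
          intro x hx
          rcases Finset.mem_insert.mp hx with hxv | hx
          · rw [hxv]; exact (hnotv _ he1').1
          · rw [Finset.mem_singleton.mp hx]
            exact (hnotv _ he1').2
        · exact h2 _ he1' _ he2' hne
      · push_neg
        exact ⟨{v, u}, Finset.mem_insert_self _ _, by simp⟩
  have hdisjim : ∀ u1 ∈ S.erase v, ∀ u2 ∈ S.erase v, u1 ≠ u2 →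
      Disjoint ((hlMatchings n ((S.erase v).erase u1)).image (insert {v, u1}))
        ((hlMatchings n ((S.erase v).erase u2)).image (insert {v, u2})) := by
    intro u1 hu1 u2 hu2 hne
    rw [Finset.disjoint_left]
    rintro M hM1 hM2
    obtain ⟨M1, hM1', rfl⟩ := Finset.mem_image.mp hM1
    obtain ⟨M2, hM2', hMeq⟩ := Finset.mem_image.mp hM2
    have h12 : ({v, u1} : Finset (Fin n)) ∈ insert {v, u2} M2 := by
      rw [hMeq]; exact Finset.mem_insert_self _ _
    rcases Finset.mem_insert.mp h12 with heq | hmem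
    · have : u1 ∈ ({v, u2} : Finset (Fin n)) := heq ▸ (by simp)
      rcases Finset.mem_insert.mp this with rfl | h
      · exact (Finset.mem_erase.mp hu1).1 rfl
      · exact hne (Finset.mem_singleton.mp h)
    · exact hvnotin u2 M2 hM2' (by
        have := ((mem_hlMatchings.mp hM2').1 _ hmem).2 (show v ∈ ({v,u1} : Finset (Fin n)) by simp)
        simp at this)
  rw [hlP, ← Finset.sum_filter_add_sum_filter_not (hlMatchings n S) (fun M => ∀ e ∈ M, v ∉ e),
    hA, hB, Finset.sum_biUnion hdisjim]
  congr 1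
  rw [Finset.mul_sum]
  refine Finset.sum_congr rfl ?_
  intro u hu
  rw [Finset.sum_image ?inj]
  case inj =>
    intro M1 hM1 M2 hM2 heq
    have h1 := hvnotin u M1 hM1
    have h2 := hvnotin u M2 hM2
    have := congrArg (fun M => Finset.erase M {v, u}) heq
    simpa [Finset.erase_insert h1, Finset.erase_insert h2] using this
  rw [hlP, Finset.mul_sum, Finset.mul_sum]
  refine Finset.sum_congr rfl ?_
  intro M hM
  have hni := hvnotin u M hM
  rw [Finset.prod_insert hni, Finset.card_insert_of_notMem hni]
  ring

lemma hlkey1 {z w : ℂ} (h : (w * (starRingEnd ℂ) z).im < 0) :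
    0 < (z * (starRingEnd ℂ) w).im := by
  simp only [Complex.mul_im, Complex.conj_re, Complex.conj_im] at *
  linarith

lemma hlP_good {n : ℕ} (W : Finset (Fin n) → ℝ) (hW : ∀ e, 0 ≤ W e) {z : ℂ}
    (hz : 0 < z.im) {S : Finset (Fin n)} {v : Fin n} (hv : v ∈ S)
    (hA : hlP W (S.erase v) z ≠ 0)
    (hIH : ∀ u ∈ S.erase v, hlP W ((S.erase v).erase u) z ≠ 0 ∧
      0 ≤ (hlP W (S.erase v) z * (starRingEnd ℂ) (hlP W ((S.erase v).erase u) z)).im ∧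
      (hlP W (S.erase v) z * (starRingEnd ℂ) (hlP W ((S.erase v).erase u) z)
        * (starRingEnd ℂ) z).im < 0) :
    0 ≤ (hlP W S z * (starRingEnd ℂ) (hlP W (S.erase v) z)).im ∧
      (hlP W S z * (starRingEnd ℂ) (hlP W (S.erase v) z) * (starRingEnd ℂ) z).im < 0 := by
  set A := hlP W (S.erase v) z with hAdef
  set B : Fin n → ℂ := fun u => hlP W ((S.erase v).erase u) z with hBdef
  rw [hlP_rec W hv z]
  have expand : (A + z * ∑ u ∈ S.erase v, (W {v, u} : ℂ) * B u) * (starRingEnd ℂ) A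
      = (Complex.normSq A : ℂ)
        + ∑ u ∈ S.erase v, (W {v, u} : ℂ) * (z * (B u * (starRingEnd ℂ) A)) := by
    rw [add_mul, Complex.mul_conj]
    congr 1
    rw [Finset.mul_sum, Finset.sum_mul]
    refine Finset.sum_congr rfl fun u _ => by ring
  have himBA : ∀ u ∈ S.erase v, 0 < (z * (B u * (starRingEnd ℂ) A)).im := by
    intro u hu
    have h := (hIH u hu).2.2
    have : B u * (starRingEnd ℂ) A = (starRingEnd ℂ) (A * (starRingEnd ℂ) (B u)) := by
      rw [map_mul, Complex.conj_conj]; ring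
    rw [this]
    exact hlkey1 h
  have himBA' : ∀ u ∈ S.erase v, (B u * (starRingEnd ℂ) A).im ≤ 0 := by
    intro u hu
    have h := (hIH u hu).2.1
    have : B u * (starRingEnd ℂ) A = (starRingEnd ℂ) (A * (starRingEnd ℂ) (B u)) := by
      rw [map_mul, Complex.conj_conj]; ring
    rw [this, Complex.conj_im]
    linarith
  constructor
  · rw [expand, Complex.add_im, Complex.ofReal_im, Complex.im_sum]
    have : ∀ u ∈ S.erase v, 0 ≤ ((W {v, u} : ℂ) * (z * (B u * (starRingEnd ℂ) A))).im := by
      intro u hu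
      simp only [Complex.mul_im, Complex.ofReal_re, Complex.ofReal_im, zero_mul, add_zero]
      exact mul_nonneg (hW _) (le_of_lt (himBA u hu))
    have := Finset.sum_nonneg this
    linarith
  · have expand2 : (A + z * ∑ u ∈ S.erase v, (W {v, u} : ℂ) * B u) * (starRingEnd ℂ) A
        * (starRingEnd ℂ) z
        = (Complex.normSq A : ℂ) * (starRingEnd ℂ) z
          + ∑ u ∈ S.erase v,
              (W {v, u} : ℂ) * ((Complex.normSq z : ℂ) * (B u * (starRingEnd ℂ) A)) := by
      rw [expand, add_mul, Finset.sum_mul]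
      congr 1
      refine Finset.sum_congr rfl fun u _ => ?_
      rw [← Complex.mul_conj z]
      ring
    rw [expand2, Complex.add_im, Complex.im_sum]
    have h1 : ((Complex.normSq A : ℂ) * (starRingEnd ℂ) z).im < 0 := by
      simp only [Complex.mul_im, Complex.ofReal_re, Complex.ofReal_im, zero_mul, add_zero,
        Complex.conj_im]
      have : 0 < Complex.normSq A := Complex.normSq_pos.mpr hA
      nlinarith
    have h2 : ∀ u ∈ S.erase v,
        ((W {v, u} : ℂ) * ((Complex.normSq z : ℂ) * (B u * (starRingEnd ℂ) A))).im ≤ 0 := by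
      intro u hu
      simp only [Complex.mul_im, Complex.ofReal_re, Complex.ofReal_im, zero_mul, add_zero,
        zero_add]
      have := himBA' u hu
      simp only [Complex.mul_im] at this
      have h0 : 0 ≤ Complex.normSq z := Complex.normSq_nonneg z
      nlinarith [mul_nonneg (hW {v, u}) h0, this]
    have := Finset.sum_nonpos h2
    linarith

lemma hlMatchings_empty (n : ℕ) : hlMatchings n ∅ = {∅} := by
  ext M
  rw [mem_hlMatchings, Finset.mem_singleton]
  constructor
  · rintro ⟨h1, -⟩
    rw [Finset.eq_empty_iff_forall_notMem]
    intro e he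
    have h2 := (h1 e he).1
    have h3 := (h1 e he).2
    rw [Finset.subset_empty] at h3
    rw [h3] at h2
    simp at h2
  · rintro rfl
    exact ⟨fun e he => absurd he (Finset.notMem_empty e),
      fun e he => absurd he (Finset.notMem_empty e)⟩

lemma hlP_empty {n : ℕ} (W : Finset (Fin n) → ℝ) (z : ℂ) : hlP W ∅ z = 1 := by
  rw [hlP, hlMatchings_empty]
  simp

lemma hlP_main {n : ℕ} (W : Finset (Fin n) → ℝ) (hW : ∀ e, 0 ≤ W e) {z : ℂ}
    (hz : 0 < z.im) (S : Finset (Fin n)) :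
    hlP W S z ≠ 0 ∧ ∀ v ∈ S,
      0 ≤ (hlP W S z * (starRingEnd ℂ) (hlP W (S.erase v) z)).im ∧
      (hlP W S z * (starRingEnd ℂ) (hlP W (S.erase v) z) * (starRingEnd ℂ) z).im < 0 := by
  induction S using Finset.strongInduction with
  | _ S IH =>
    have hGood : ∀ v ∈ S,
        0 ≤ (hlP W S z * (starRingEnd ℂ) (hlP W (S.erase v) z)).im ∧
        (hlP W S z * (starRingEnd ℂ) (hlP W (S.erase v) z) * (starRingEnd ℂ) z).im < 0 := by
      intro v hv
      refine hlP_good W hW hz hv (IH _ (Finset.erase_ssubset hv)).1 ?_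
      intro u hu
      exact ⟨(IH _ ((Finset.erase_ssubset hu).trans (Finset.erase_ssubset hv))).1,
        (IH _ (Finset.erase_ssubset hv)).2 u hu⟩
    refine ⟨?_, hGood⟩
    rcases S.eq_empty_or_nonempty with rfl | ⟨v, hv⟩
    · rw [hlP_empty]; exact one_ne_zero
    · intro h0
      have h := (hGood v hv).2
      rw [h0] at h
      simp at h

lemma hlP_ne_zero {n : ℕ} (W : Finset (Fin n) → ℝ) (hW : ∀ e, 0 ≤ W e) {z : ℂ}
    (hz : z.im ≠ 0) (S : Finset (Fin n)) : hlP W S z ≠ 0 := by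
  have hconj : ∀ w : ℂ, hlP W S ((starRingEnd ℂ) w) = (starRingEnd ℂ) (hlP W S w) := by
    intro w
    rw [hlP, hlP, map_sum]
    refine Finset.sum_congr rfl fun M _ => ?_
    rw [map_mul, map_pow, map_prod]
    simp [Complex.conj_ofReal]
  rcases lt_or_gt_of_ne hz with hlt | hgt
  · have h1 : 0 < ((starRingEnd ℂ) z).im := by
      rw [Complex.conj_im]; linarith
    have h2 := (hlP_main W hW h1 S).1
    rw [hconj] at h2
    intro h0
    rw [h0] at h2
    simp at h2
  · exact (hlP_main W hW hgt S).1

lemma hl_bridge {n : ℕ} (W : Finset (Fin n) → ℝ) (a : ℕ → ℝ)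
    (ha : ∀ j, a j = ∑ M ∈ Finset.univ.filter
        (fun M : Finset (Finset (Fin n)) =>
          M.card = j ∧ (∀ e ∈ M, e.card = 2) ∧
            (∀ e ∈ M, ∀ e' ∈ M, e ≠ e' → Disjoint e e')),
        ∏ e ∈ M, W e) (z : ℂ) :
    (∑ j ∈ Finset.range (n / 2 + 1), (a j : ℂ) * z ^ j) = hlP W Finset.univ z := by
  classical
  have hcard : ∀ M ∈ hlMatchings n (Finset.univ : Finset (Fin n)),
      M.card ∈ Finset.range (n / 2 + 1) := by
    intro M hM
    obtain ⟨h1, h2⟩ := mem_hlMatchings.mp hM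
    have hbu : (M.biUnion id).card = ∑ e ∈ M, e.card := by
      apply Finset.card_biUnion
      intro e he e' he' hne
      exact h2 e he e' he' hne
    have hsum : ∑ e ∈ M, e.card = 2 * M.card := by
      rw [Finset.sum_congr rfl (fun e he => (h1 e he).1), Finset.sum_const, smul_eq_mul,
        mul_comm]
    have hle : (M.biUnion id).card ≤ n := by
      calc (M.biUnion id).card ≤ (Finset.univ : Finset (Fin n)).card :=
            Finset.card_le_card (Finset.subset_univ _)
        _ = n := Finset.card_univ.trans (Fintype.card_fin n)
    rw [Finset.mem_range, Nat.lt_succ_iff, Nat.le_div_iff_mul_le (by norm_num)]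
    omega
  calc (∑ j ∈ Finset.range (n / 2 + 1), (a j : ℂ) * z ^ j)
      = ∑ j ∈ Finset.range (n / 2 + 1),
          ∑ M ∈ (hlMatchings n Finset.univ).filter (fun M => M.card = j),
            (∏ e ∈ M, (W e : ℂ)) * z ^ M.card := by
        refine Finset.sum_congr rfl fun j hj => ?_
        rw [ha j]
        push_cast
        rw [Finset.sum_mul]
        refine Finset.sum_congr ?_ ?_
        · ext M
          simp only [Finset.mem_filter, Finset.mem_univ, true_and, mem_hlMatchings]
          constructor
          · rintro ⟨hc, h1, h2⟩
            exact ⟨⟨fun e he => ⟨h1 e he, Finset.subset_univ e⟩, h2⟩, hc⟩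
          · rintro ⟨⟨h1, h2⟩, hc⟩
            exact ⟨hc, fun e he => (h1 e he).1, h2⟩
        · intro M hM
          rw [(Finset.mem_filter.mp hM).2]
    _ = ∑ M ∈ hlMatchings n Finset.univ, (∏ e ∈ M, (W e : ℂ)) * z ^ M.card :=
        Finset.sum_fiberwise_of_maps_to hcard _
    _ = hlP W Finset.univ z := rfl

lemma hl_a_zero {n : ℕ} (W : Finset (Fin n) → ℝ) (a : ℕ → ℝ)
    (ha : ∀ j, a j = ∑ M ∈ Finset.univ.filter
        (fun M : Finset (Finset (Fin n)) =>
          M.card = j ∧ (∀ e ∈ M, e.card = 2) ∧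
            (∀ e ∈ M, ∀ e' ∈ M, e ≠ e' → Disjoint e e')),
        ∏ e ∈ M, W e) : a 0 = 1 := by
  classical
  rw [ha 0]
  have : Finset.univ.filter
      (fun M : Finset (Finset (Fin n)) =>
        M.card = 0 ∧ (∀ e ∈ M, e.card = 2) ∧
          (∀ e ∈ M, ∀ e' ∈ M, e ≠ e' → Disjoint e e')) = {∅} := by
    ext M
    simp only [Finset.mem_filter, Finset.mem_univ, true_and, Finset.mem_singleton,
      Finset.card_eq_zero]
    constructor
    · rintro ⟨rfl, -⟩; rfl
    · rintro rfl
      exact ⟨rfl, fun e he => absurd he (Finset.notMem_empty e),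
        fun e he => absurd he (Finset.notMem_empty e)⟩
  rw [this]
  simp

/-- **Theorem (Heilmann–Lieb: real-rootedness of the matching polynomial).**
Fix `n ≥ 1` and nonnegative weights `W(e)` on the 2-element subsets (edges) of
`{1,…,n}`.  For `0 ≤ j ≤ ⌊n/2⌋` let `a_j` be the total weight of all matchings with
exactly `j` edges (sets of `j` pairwise disjoint edges), the weight of a matching being
the product of its edge weights.  Then every complex root of `∑_j a_j z^j` is real and
nonpositive. -/
theorem stmt7 (n : ℕ) (hn : 1 ≤ n) (W : Finset (Fin n) → ℝ) (hW : ∀ e, 0 ≤ W e)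
    (a : ℕ → ℝ)
    (ha : ∀ j, a j = ∑ M ∈ Finset.univ.filter
        (fun M : Finset (Finset (Fin n)) =>
          M.card = j ∧ (∀ e ∈ M, e.card = 2) ∧
            (∀ e ∈ M, ∀ e' ∈ M, e ≠ e' → Disjoint e e')),
        ∏ e ∈ M, W e)
    (z : ℂ) (hz : (∑ j ∈ Finset.range (n / 2 + 1), (a j : ℂ) * z ^ j) = 0) :
    ∃ r : ℝ, r ≤ 0 ∧ z = (r : ℂ) := by
  by_cases him : z.im = 0
  · -- z is real
    have hzre : z = (z.re : ℂ) := Complex.ext rfl (by simp [him])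
    refine ⟨z.re, ?_, hzre⟩
    by_contra hpos
    push_neg at hpos
    -- real positive root is impossible
    have hreal : (∑ j ∈ Finset.range (n / 2 + 1), a j * z.re ^ j) = 0 := by
      have : ((∑ j ∈ Finset.range (n / 2 + 1), a j * z.re ^ j : ℝ) : ℂ) = 0 := by
        push_cast
        rw [← hz]
        exact Finset.sum_congr rfl fun j _ => by rw [← hzre]
      exact_mod_cast this
    have hanneg : ∀ j, 0 ≤ a j := by
      intro j
      rw [ha j]
      exact Finset.sum_nonneg fun M _ => Finset.prod_nonneg fun e _ => hW e
    have hterm : ∀ j ∈ Finset.range (n / 2 + 1), 0 ≤ a j * z.re ^ j := by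
      intro j _
      exact mul_nonneg (hanneg j) (pow_nonneg (le_of_lt hpos) j)
    have h0mem : 0 ∈ Finset.range (n / 2 + 1) := Finset.mem_range.mpr (Nat.succ_pos _)
    have hge : a 0 * z.re ^ 0 ≤ ∑ j ∈ Finset.range (n / 2 + 1), a j * z.re ^ j :=
      Finset.single_le_sum hterm h0mem
    rw [hl_a_zero W a ha] at hge
    simp at hge
    linarith [hreal, hge]
  · -- nonreal root is impossible
    exfalso
    rw [hl_bridge W a ha z] at hz
    exact hlP_ne_zero W hW him Finset.univ hz
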